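/- Let q be a prime power, s | m with n ≤ s and F_q ⊊ F_{q^s} ⊊ F_{q^m}. Let k < n, α_1,...,α_n ∈ F_{q^s} linearly independent over F_q, η₁ ∈ F_{q^m} \ F_{q^s}, b ∈ F_{q^s}*, and η₂ = b·η₁. Fix 0 ≤ h ≤ k-1, 0 ≤ t₁ < t₂ ≤ n-k-1. Then the twisted Gabidulin code C₂ with two twists η₁, η₂ at position h (generator: Moore rows (α_j^{q^i})_j for i ≠ h, plus the row (α_j^{q^h} + η₁ α_j^{q^{k+t₁}} + η₂ α_j^{q^{k+t₂}})_j) is MRD. -/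

import Mathlib

open Finset

section Aux

variable {Fq K : Type*} [Field Fq] [Fintype Fq] [Field K] [Algebra Fq K]

lemma frob_add (x y : K) (j : ℕ) :
    (x + y) ^ (Fintype.card Fq) ^ j = x ^ (Fintype.card Fq) ^ j + y ^ (Fintype.card Fq) ^ j := by
  classical
  set p := ringChar Fq with hpdef
  haveI : CharP Fq p := ringChar.charP Fq
  obtain ⟨e, hp, hcard⟩ := FiniteField.card Fq p
  haveI : Fact p.Prime := ⟨hp⟩
  haveI : CharP K p := charP_of_injective_ringHom (algebraMap Fq K).injective p
  rw [hcard, ← pow_mul]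
  exact add_pow_char_pow x y p _

lemma frob_smul (a : Fq) (x : K) (j : ℕ) :
    (a • x) ^ (Fintype.card Fq) ^ j = a • x ^ (Fintype.card Fq) ^ j := by
  rw [Algebra.smul_def, Algebra.smul_def, mul_pow, ← map_pow, FiniteField.pow_card_pow]

noncomputable def frobLM (Fq : Type*) {K : Type*} [Field Fq] [Fintype Fq] [Field K] [Algebra Fq K]
    (j : ℕ) : K →ₗ[Fq] K :=
  IsLinearMap.mk' (fun x : K => x ^ (Fintype.card Fq) ^ j)
    ⟨fun x y => frob_add x y j, fun a x => frob_smul a x j⟩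

@[simp] lemma frobLM_apply (j : ℕ) (x : K) : frobLM Fq j x = x ^ (Fintype.card Fq) ^ j := rfl

lemma qpoly_ker_bound [Fintype K] {ι : Type*} [Fintype ι] [DecidableEq ι]
    (c : ι → K) (e : ι → ℕ) (he : Function.Injective e)
    {i₀ : ι} (hc : c i₀ ≠ 0) {d : ℕ} (hd : ∀ i, e i ≤ d)
    {W : Submodule Fq K} (hW : ∀ x ∈ W, ∑ i, c i * x ^ (Fintype.card Fq) ^ (e i) = 0) :
    Module.finrank Fq W ≤ d := by
  classical
  have hq1 : 1 < Fintype.card Fq := Fintype.one_lt_card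
  set q := Fintype.card Fq with hq
  set P : Polynomial K := ∑ i, Polynomial.C (c i) * Polynomial.X ^ q ^ (e i) with hP
  have hcoeff : ∀ i, P.coeff (q ^ (e i)) = c i := by
    intro i
    rw [hP, Polynomial.finset_sum_coeff]
    rw [Finset.sum_eq_single i]
    · simp
    · intro j _ hji
      have : q ^ e j ≠ q ^ e i := by
        intro hc'
        exact hji (he (Nat.pow_right_injective hq1 hc'))
      simp [Polynomial.coeff_C_mul, Polynomial.coeff_X_pow, (Ne.symm this)]
    · intro hi; exact absurd (Finset.mem_univ i) hi
  have hPne : P ≠ 0 := fun h0 => hc (by rw [← hcoeff i₀, h0, Polynomial.coeff_zero])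
  have hdeg : P.natDegree ≤ q ^ d := by
    apply Polynomial.natDegree_sum_le_of_forall_le
    intro i _
    refine le_trans (Polynomial.natDegree_C_mul_le _ _) ?_
    rw [Polynomial.natDegree_X_pow]
    exact Nat.pow_le_pow_right (by omega) (hd i)
  have hroots : q ^ Module.finrank Fq W ≤ P.natDegree := by
    have h1 : Fintype.card W = q ^ Module.finrank Fq W := Module.card_eq_pow_finrank
    have h2 : (W : Set K).toFinset ⊆ P.roots.toFinset := by
      intro x hx
      simp only [Set.mem_toFinset, SetLike.mem_coe] at hx
      rw [Multiset.mem_toFinset, Polynomial.mem_roots hPne]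
      have := hW x hx
      simp only [Polynomial.IsRoot, hP, Polynomial.eval_finset_sum, Polynomial.eval_mul,
        Polynomial.eval_C, Polynomial.eval_pow, Polynomial.eval_X]
      exact this
    calc q ^ Module.finrank Fq W = Fintype.card W := h1.symm
      _ = (W : Set K).toFinset.card := by rw [Set.toFinset_card]; congr 1
      _ ≤ P.roots.toFinset.card := Finset.card_le_card h2
      _ ≤ Multiset.card P.roots := Multiset.toFinset_card_le _
      _ ≤ P.natDegree := Polynomial.card_roots' P
  have := le_trans hroots hdeg
  exact (Nat.pow_le_pow_iff_right hq1).1 this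

lemma moore_det_ne_zero [Fintype K] {k : ℕ} {γ : Fin k → K} (hγ : LinearIndependent Fq γ) :
    (Matrix.of fun i j : Fin k => γ j ^ (Fintype.card Fq) ^ (i : ℕ)).det ≠ 0 := by
  classical
  intro hdet
  obtain ⟨v, hv, hvM⟩ := Matrix.exists_vecMul_eq_zero_iff.2 hdet
  obtain ⟨i₀, hi₀⟩ := Function.ne_iff.1 hv
  set L : K →ₗ[Fq] K := ∑ i : Fin k, v i • frobLM Fq (i : ℕ) with hLdef
  have hL : ∀ x : K, L x = ∑ i : Fin k, v i * x ^ (Fintype.card Fq) ^ (i : ℕ) := by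
    intro x
    simp [hLdef, LinearMap.sum_apply, LinearMap.smul_apply, smul_eq_mul]
  have hker : ∀ x ∈ Submodule.span Fq (Set.range γ),
      ∑ i : Fin k, v i * x ^ (Fintype.card Fq) ^ ((fun i : Fin k => (i:ℕ)) i) = 0 := by
    intro x hx
    have hle : Submodule.span Fq (Set.range γ) ≤ LinearMap.ker L := by
      rw [Submodule.span_le]
      rintro _ ⟨j, rfl⟩
      rw [SetLike.mem_coe, LinearMap.mem_ker, hL]
      have := congrFun hvM j
      simpa [Matrix.vecMul, dotProduct] using this
    have := hle hx
    rw [LinearMap.mem_ker] at this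
    rw [← hL x]
    exact this
  have hbd := qpoly_ker_bound (Fq := Fq) v (fun i : Fin k => (i : ℕ))
    Fin.val_injective hi₀ (d := k - 1) (fun i => show (i:ℕ) ≤ k - 1 by have := i.isLt; omega) hker
  rw [finrank_span_eq_card hγ, Fintype.card_fin] at hbd
  have : 0 < k := i₀.pos
  omega

end Aux

/-- with evaluation points in an intermediate subfield `F_{q^s}` (`n ≤ s`),
`η₁ ∈ F_{q^m} \ F_{q^s}`, `b ∈ F_{q^s}*` and `η₂ = b·η₁`, the twisted Gabidulin code `C₂`
with two twists is MRD. -/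
theorem C2_proportional_MRD {Fq Fs K : Type*} [Field Fq] [Fintype Fq] [Field Fs] [Fintype Fs]
    [Field K] [Fintype K] [Algebra Fq Fs] [Algebra Fs K] [Algebra Fq K] [IsScalarTower Fq Fs K]
    (q s m n k h t₁ t₂ : ℕ) (hq : Fintype.card Fq = q) (hFs : Fintype.card Fs = q ^ s)
    (hK : Fintype.card K = q ^ m) (hs1 : 1 < s) (hsm : s < m) (hsd : s ∣ m)
    (hns : n ≤ s) (hkn : k < n) (hh : h < k) (ht : t₁ < t₂) (ht₂ : t₂ < n - k)
    (β : ℕ → Fs) (hβ : LinearIndependent Fq (fun i : Fin n => β (i:ℕ)))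
    (η₁ η₂ : K) (hη₁ : η₁ ∉ Set.range (algebraMap Fs K))
    (b : Fs) (hb : b ≠ 0) (hη₂ : η₂ = algebraMap Fs K b * η₁) :
    sInf {w : ℕ | ∃ c ∈ Submodule.span K (Set.range (fun i : Fin k => fun j : Fin n =>
          if (i:ℕ) = h then
            algebraMap Fs K (β (j:ℕ)) ^ q ^ h + η₁ * algebraMap Fs K (β (j:ℕ)) ^ q ^ (k + t₁)
              + η₂ * algebraMap Fs K (β (j:ℕ)) ^ q ^ (k + t₂)
          else algebraMap Fs K (β (j:ℕ)) ^ q ^ (i:ℕ))),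
        c ≠ 0 ∧ w = Module.finrank Fq (Submodule.span Fq (Set.range c))} = n - k + 1 := by
  classical
  subst hq hη₂
  have hFinj : Function.Injective (algebraMap Fs K) := (algebraMap Fs K).injective
  haveI : Module.Finite Fq K := Module.Finite.of_finite
  haveI : Module.Finite Fq (Fin n → K) := Module.Finite.of_finite
  -- the twisted-row linear maps
  set G : Fin k → K →ₗ[Fq] K := fun i =>
    if (i:ℕ) = h then
      frobLM Fq h + η₁ • frobLM Fq (k + t₁) + (algebraMap Fs K b * η₁) • frobLM Fq (k + t₂)
    else frobLM Fq (i:ℕ) with hGdef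
  have hG : ∀ (i : Fin k) (x : K), G i x =
      if (i:ℕ) = h then
        x ^ Fintype.card Fq ^ h + η₁ * x ^ Fintype.card Fq ^ (k + t₁)
          + algebraMap Fs K b * η₁ * x ^ Fintype.card Fq ^ (k + t₂)
      else x ^ Fintype.card Fq ^ (i:ℕ) := by
    intro i x
    by_cases hih : (i:ℕ) = h <;> simp [hGdef, hih, smul_eq_mul]
  set g : Fin k → Fin n → K := fun i j => G i (algebraMap Fs K (β (j:ℕ))) with hgdef
  have hgg : (fun i : Fin k => fun j : Fin n =>
      if (i:ℕ) = h then
        algebraMap Fs K (β (j:ℕ)) ^ Fintype.card Fq ^ h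
          + η₁ * algebraMap Fs K (β (j:ℕ)) ^ Fintype.card Fq ^ (k + t₁)
          + algebraMap Fs K b * η₁ * algebraMap Fs K (β (j:ℕ)) ^ Fintype.card Fq ^ (k + t₂)
      else algebraMap Fs K (β (j:ℕ)) ^ Fintype.card Fq ^ (i:ℕ)) = g := by
    funext i j
    exact (hG i (algebraMap Fs K (β (j:ℕ)))).symm
  rw [hgg]
  -- evaluation points
  set Bvec : Fin n → K := fun j => algebraMap Fs K (β (j:ℕ)) with hBdef
  set Flin : Fs →ₗ[Fq] K := (IsScalarTower.toAlgHom Fq Fs K).toLinearMap with hFlin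
  have hFlinapp : ∀ a : Fs, Flin a = algebraMap Fs K a := fun _ => rfl
  have hBli : LinearIndependent Fq Bvec := by
    have h2 := hβ.map' Flin (LinearMap.ker_eq_bot.mpr (fun a c hac => hFinj hac))
    exact h2
  set V : Submodule Fq K := Submodule.span Fq (Set.range Bvec) with hVdef
  have hVrank : Module.finrank Fq V = n := by
    rw [hVdef, finrank_span_eq_card hBli, Fintype.card_fin]
  have hVle : V ≤ LinearMap.range Flin := by
    rw [hVdef, Submodule.span_le]
    rintro _ ⟨j, rfl⟩
    exact ⟨β (j:ℕ), rfl⟩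
  have hLapp : ∀ (lam : Fin k → K) (x : K),
      (∑ i : Fin k, lam i • G i) x = ∑ i : Fin k, lam i * G i x := by
    intro lam x
    simp [LinearMap.sum_apply, LinearMap.smul_apply, smul_eq_mul]
  set h0 : Fin k := ⟨h, hh⟩ with hh0
  -- KEY LOWER BOUND
  have key : ∀ cw : Fin n → K, cw ∈ Submodule.span K (Set.range g) → cw ≠ 0 →
      n - k + 1 ≤ Module.finrank Fq (Submodule.span Fq (Set.range cw)) := by
    intro cw hcw hne
    obtain ⟨lam, hlam⟩ := (Submodule.mem_span_range_iff_exists_fun K).1 hcw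
    have hlamne : lam ≠ 0 := by
      rintro rfl
      apply hne
      rw [← hlam]
      funext j
      simp
    set L : K →ₗ[Fq] K := ∑ i : Fin k, lam i • G i with hLdef
    have hcwL : ∀ j, cw j = L (Bvec j) := by
      intro j
      rw [← hlam, hLdef, hLapp]
      simp [hgdef, hBdef, Finset.sum_apply]
    have hspan : Submodule.map L V = Submodule.span Fq (Set.range cw) := by
      rw [hVdef, Submodule.map_span, ← Set.range_comp]
      congr 1
      exact congrArg Set.range (funext fun j => (hcwL j).symm)
    have hrn := LinearMap.finrank_range_add_finrank_ker (L.domRestrict V)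
    rw [LinearMap.range_domRestrict] at hrn
    suffices hker : Module.finrank Fq (LinearMap.ker (L.domRestrict V)) ≤ k - 1 by
      rw [← hspan]
      rw [hVrank] at hrn
      omega
    by_contra hge
    push_neg at hge
    have hkle : k ≤ Module.finrank Fq (LinearMap.ker (L.domRestrict V)) := by omega
    set N := LinearMap.ker (L.domRestrict V) with hNdef
    haveI : Module.Free Fq N := Module.Free.of_divisionRing Fq N
    set bb := Module.finBasis Fq N with hbb
    set γ : Fin k → K := fun j => ((bb (Fin.castLE hkle j) : V) : K) with hγdef
    have hγli : LinearIndependent Fq γ := by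
      have h1 := bb.linearIndependent
      have h2 := (h1.map_injOn N.subtype N.injective_subtype.injOn).map_injOn V.subtype
        V.injective_subtype.injOn
      exact h2.comp (Fin.castLE hkle) (Fin.castLE_injective hkle)
    have hγV : ∀ j, γ j ∈ V := fun j => (bb (Fin.castLE hkle j) : V).2
    have hγL : ∀ j, L (γ j) = 0 := by
      intro j
      exact (bb (Fin.castLE hkle j)).2
    have hexists : ∀ j, ∃ a : Fs, algebraMap Fs K a = γ j := by
      intro j
      obtain ⟨a, ha⟩ := hVle (hγV j)
      exact ⟨a, ha⟩
    choose δ hδ using hexists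
    set M : Matrix (Fin k) (Fin k) K := Matrix.of fun i j => G i (γ j) with hMdef
    have hdet0 : M.det = 0 := by
      rw [← Matrix.exists_vecMul_eq_zero_iff]
      refine ⟨lam, hlamne, ?_⟩
      funext j
      simp only [Matrix.vecMul, dotProduct, hMdef, Matrix.of_apply, Pi.zero_apply]
      rw [← hLapp lam (γ j), ← hLdef]
      exact hγL j
    set M0 : Matrix (Fin k) (Fin k) K :=
      Matrix.of fun i j : Fin k => γ j ^ Fintype.card Fq ^ (i:ℕ) with hM0
    set r1 : Fin k → K := fun j => γ j ^ Fintype.card Fq ^ (k + t₁) with hr1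
    set r2 : Fin k → K := fun j => γ j ^ Fintype.card Fq ^ (k + t₂) with hr2
    have hMeq : M = M0.updateRow h0
        ((fun j => γ j ^ Fintype.card Fq ^ h) + (η₁ • r1 + (algebraMap Fs K b * η₁) • r2)) := by
      ext i j
      by_cases hih : i = h0
      · subst hih
        rw [Matrix.updateRow_self]
        have hvh : ((h0 : Fin k) : ℕ) = h := rfl
        show G h0 (γ j) = _
        rw [hG, if_pos hvh]
        simp only [Pi.add_apply, Pi.smul_apply, smul_eq_mul, hr1, hr2]
        ring
      · have hvh : (i:ℕ) ≠ h := fun hc => hih (Fin.ext hc)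
        rw [Matrix.updateRow_ne hih]
        simp [hMdef, hM0, hG, hvh]
    have hdetsplit : M.det = M0.det + η₁ * (M0.updateRow h0 r1).det
        + (algebraMap Fs K b * η₁) * (M0.updateRow h0 r2).det := by
      rw [hMeq, Matrix.det_updateRow_add, Matrix.det_updateRow_add,
        Matrix.det_updateRow_smul, Matrix.det_updateRow_smul]
      have hrow : (fun j => γ j ^ Fintype.card Fq ^ h) = M0 h0 := by
        funext j; simp [hM0, hh0]
      rw [hrow, Matrix.updateRow_eq_self]
      ring
    have hM0ne : M0.det ≠ 0 := moore_det_ne_zero hγli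
    set A0 : Matrix (Fin k) (Fin k) Fs :=
      Matrix.of fun i j : Fin k => δ j ^ Fintype.card Fq ^ (i:ℕ) with hA0
    set A1 := A0.updateRow h0 (fun j => δ j ^ Fintype.card Fq ^ (k + t₁)) with hA1
    set A2 := A0.updateRow h0 (fun j => δ j ^ Fintype.card Fq ^ (k + t₂)) with hA2
    have hmap0 : M0 = A0.map (algebraMap Fs K) := by
      ext i j
      simp only [hM0, hA0, Matrix.map_apply, Matrix.of_apply]
      rw [← hδ j, ← map_pow]
    have hmap1 : M0.updateRow h0 r1 = A1.map (algebraMap Fs K) := by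
      ext i j
      simp only [hA1, Matrix.map_apply, Matrix.updateRow_apply, hr1, hM0, hA0, Matrix.of_apply]
      by_cases hih : i = h0 <;> simp [hih, ← hδ j, ← map_pow]
    have hmap2 : M0.updateRow h0 r2 = A2.map (algebraMap Fs K) := by
      ext i j
      simp only [hA2, Matrix.map_apply, Matrix.updateRow_apply, hr2, hM0, hA0, Matrix.of_apply]
      by_cases hih : i = h0 <;> simp [hih, ← hδ j, ← map_pow]
    have hd0 : algebraMap Fs K A0.det = M0.det := by
      rw [RingHom.map_det, RingHom.mapMatrix_apply, ← hmap0]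
    have hd1 : algebraMap Fs K A1.det = (M0.updateRow h0 r1).det := by
      rw [RingHom.map_det, RingHom.mapMatrix_apply, ← hmap1]
    have hd2 : algebraMap Fs K A2.det = (M0.updateRow h0 r2).det := by
      rw [RingHom.map_det, RingHom.mapMatrix_apply, ← hmap2]
    have h9 : (0:K) = M0.det + η₁ * (M0.updateRow h0 r1).det
        + (algebraMap Fs K b * η₁) * (M0.updateRow h0 r2).det := by
      rw [← hdetsplit, hdet0]
    have key2 : algebraMap Fs K A0.det + η₁ * algebraMap Fs K (A1.det + b * A2.det) = 0 := by
      rw [map_add, map_mul, hd0, hd1, hd2]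
      linear_combination -h9
    have hA0ne : A0.det ≠ 0 := fun hz => hM0ne (by rw [← hd0, hz, map_zero])
    by_cases hB : A1.det + b * A2.det = 0
    · rw [hB, map_zero, mul_zero, add_zero] at key2
      exact absurd (hFinj (key2.trans (map_zero _).symm)) hA0ne
    · have hFB : algebraMap Fs K (A1.det + b * A2.det) ≠ 0 :=
        fun hz => hB (hFinj (hz.trans (map_zero _).symm))
      refine absurd ?_ hη₁
      refine ⟨-(A0.det / (A1.det + b * A2.det)), ?_⟩
      have h10 : algebraMap Fs K A0.det = -η₁ * algebraMap Fs K (A1.det + b * A2.det) := by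
        linear_combination key2
      rw [map_neg, map_div₀, h10, mul_div_cancel_right₀ _ hFB, neg_neg]
  -- generators linearly independent over K
  have hgli : LinearIndependent K g := by
    rw [Fintype.linearIndependent_iff]
    intro lam hlam
    by_contra hex
    push_neg at hex
    obtain ⟨i₀, hi₀⟩ := hex
    set L : K →ₗ[Fq] K := ∑ i : Fin k, lam i • G i with hLdef
    set cc : Fin k ⊕ Fin 2 → K :=
      Sum.elim lam ![lam h0 * η₁, lam h0 * (algebraMap Fs K b * η₁)] with hcc
    set ee : Fin k ⊕ Fin 2 → ℕ := Sum.elim (fun i : Fin k => (i:ℕ)) ![k + t₁, k + t₂] with hee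
    have hsum : ∀ x : K, ∑ i, cc i * x ^ Fintype.card Fq ^ (ee i) = L x := by
      intro x
      rw [hLdef, hLapp, Fintype.sum_sum_type]
      have hterm : ∀ i : Fin k, lam i * G i x
          = lam i * x ^ Fintype.card Fq ^ (i:ℕ)
            + (if i = h0 then lam h0 * (η₁ * x ^ Fintype.card Fq ^ (k + t₁))
                + lam h0 * (algebraMap Fs K b * η₁ * x ^ Fintype.card Fq ^ (k + t₂)) else 0) := by
        intro i
        by_cases hih : i = h0
        · subst hih
          have hvh : ((h0 : Fin k) : ℕ) = h := rfl
          rw [hG, if_pos hvh, if_pos rfl, hvh]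
          ring
        · have hvh : (i:ℕ) ≠ h := fun hc => hih (Fin.ext hc)
          rw [hG, if_neg hvh, if_neg hih]
          ring
      rw [Finset.sum_congr rfl (fun i _ => hterm i), Finset.sum_add_distrib,
        Finset.sum_ite_eq' Finset.univ h0]
      simp only [Finset.mem_univ, if_pos]
      rw [Fin.sum_univ_two]
      simp only [hcc, hee, Sum.elim_inl, Sum.elim_inr, Matrix.cons_val_zero, Matrix.cons_val_one,
        Matrix.head_cons]
      ring
    have hWroots : ∀ x ∈ V, ∑ i, cc i * x ^ Fintype.card Fq ^ (ee i) = 0 := by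
      intro x hx
      rw [hsum]
      have hle : V ≤ LinearMap.ker L := by
        rw [hVdef, Submodule.span_le]
        rintro _ ⟨j, rfl⟩
        rw [SetLike.mem_coe, LinearMap.mem_ker]
        have h3 : (∑ i : Fin k, lam i • g i) j = 0 := by rw [hlam]; rfl
        calc L (Bvec j) = ∑ i : Fin k, lam i * G i (Bvec j) := by rw [hLdef, hLapp]
          _ = (∑ i : Fin k, lam i • g i) j := by
              simp [hgdef, hBdef, Finset.sum_apply]
          _ = 0 := h3
      exact LinearMap.mem_ker.1 (hle hx)
    have hval : ∀ c : Fin 2, ee (Sum.inr c) = k + t₁ ∨ ee (Sum.inr c) = k + t₂ := by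
      intro c
      fin_cases c
      · exact Or.inl rfl
      · exact Or.inr rfl
    have heinj : Function.Injective ee := by
      rintro (a | a) (c | c) hac
      · have h5 : (a : ℕ) = (c : ℕ) := hac
        exact congrArg Sum.inl (Fin.ext h5)
      · exfalso
        have h1 : (a : ℕ) < k := a.isLt
        have h2 : ee (Sum.inl a) = (a:ℕ) := rfl
        rcases hval c with h3 | h3 <;> rw [h2, h3] at hac <;> omega
      · exfalso
        have h1 : (c : ℕ) < k := c.isLt
        have h2 : ee (Sum.inl c) = (c:ℕ) := rfl
        rcases hval a with h3 | h3 <;> rw [h2, h3] at hac <;> omega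
      · have h5 : a = c := by
          fin_cases a <;> fin_cases c
          · rfl
          · exfalso; have h6 : k + t₁ = k + t₂ := hac; omega
          · exfalso; have h6 : k + t₂ = k + t₁ := hac; omega
          · rfl
        rw [h5]
    have hdle : ∀ i, ee i ≤ n - 1 := by
      rintro (a | a)
      · have h1 : (a : ℕ) < k := a.isLt
        have h2 : ee (Sum.inl a) = (a:ℕ) := rfl
        rw [h2]; omega
      · rcases hval a with h3 | h3 <;> rw [h3] <;> omega
    have hbd := qpoly_ker_bound cc ee heinj (i₀ := Sum.inl i₀)
      (by simpa [hcc] using hi₀) hdle hWroots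
    rw [hVrank] at hbd
    omega
  -- upper bound: a codeword supported on the last n-k+1 coordinates
  have hWk : Module.finrank K (Submodule.span K (Set.range g)) = k := by
    rw [finrank_span_eq_card hgli, Fintype.card_fin]
  set π : (Fin n → K) →ₗ[K] (Fin (k - 1) → K) :=
    LinearMap.funLeft K K (fun j : Fin (k - 1) => Fin.castLE (by omega) j) with hπ
  have hker : LinearMap.ker (π.domRestrict (Submodule.span K (Set.range g))) ≠ ⊥ := by
    intro hbot
    have hinj := LinearMap.ker_eq_bot.1 hbot
    have hle := LinearMap.finrank_le_finrank_of_injective hinj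
    rw [hWk, Module.finrank_pi, Fintype.card_fin] at hle
    omega
  obtain ⟨x, hxker, hxne⟩ := (Submodule.ne_bot_iff _).1 hker
  set cw : Fin n → K := (x : Fin n → K) with hcwdef
  have hcwmem : cw ∈ Submodule.span K (Set.range g) := x.2
  have hcwne : cw ≠ 0 := by
    intro hz
    exact hxne (Subtype.ext hz)
  have hzero : ∀ j : Fin n, (j:ℕ) < k - 1 → cw j = 0 := by
    intro j hj
    have h2 := congrFun (LinearMap.mem_ker.1 hxker) ⟨(j:ℕ), hj⟩
    have h3 : Fin.castLE (by omega : k - 1 ≤ n) ⟨(j:ℕ), hj⟩ = j := Fin.ext rfl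
    simpa [hπ, LinearMap.domRestrict_apply, LinearMap.funLeft_apply, hcwdef, h3] using h2
  set c' : Fin (n - (k - 1)) → K := fun j => cw ⟨k - 1 + (j:ℕ), by have := j.isLt; omega⟩
    with hc'
  have hsub : Set.range cw ⊆ insert (0:K) (Set.range c') := by
    rintro _ ⟨i, rfl⟩
    by_cases hi : (i:ℕ) < k - 1
    · exact Set.mem_insert_iff.2 (Or.inl (hzero i hi))
    · refine Set.mem_insert_iff.2 (Or.inr ⟨⟨(i:ℕ) - (k - 1), by have := i.isLt; omega⟩, ?_⟩)
      simp only [hc']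
      congr 1
      apply Fin.ext
      simp
      omega
  have hle1 : Submodule.span Fq (Set.range cw) ≤ Submodule.span Fq (Set.range c') := by
    have := Submodule.span_mono (R := Fq) hsub
    rwa [Submodule.span_insert_zero] at this
  have hle2 : Module.finrank Fq (Submodule.span Fq (Set.range cw))
      ≤ Module.finrank Fq (Submodule.span Fq (Set.range c')) := Submodule.finrank_mono hle1
  have hle3 : Module.finrank Fq (Submodule.span Fq (Set.range c')) ≤ n - (k - 1) := by
    have h4 := finrank_span_le_card (R := Fq) (Set.range c')
    rw [Set.toFinset_card] at h4
    exact le_trans h4 (le_trans (Fintype.card_range_le c') (by rw [Fintype.card_fin]))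
  have hup : Module.finrank Fq (Submodule.span Fq (Set.range cw)) ≤ n - k + 1 := by
    have : n - (k - 1) = n - k + 1 := by omega
    omega
  have hlowc := key cw hcwmem hcwne
  have hmem : (n - k + 1) ∈ {w : ℕ | ∃ c ∈ Submodule.span K (Set.range g),
      c ≠ 0 ∧ w = Module.finrank Fq (Submodule.span Fq (Set.range c))} :=
    ⟨cw, hcwmem, hcwne, by omega⟩
  apply le_antisymm
  · exact Nat.sInf_le hmem
  · refine le_csInf ⟨_, hmem⟩ ?_
    rintro w ⟨c, hc1, hc2, rfl⟩
    exact key c hc1 hc2
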